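/- For any smooth skew-symmetric matrix field A : ℝ³ → so(3), setting α = −Curl A and 𝔎 = D axl A, the following converting identities hold: dev sym α = dev sym 𝔎, skw α = −skw 𝔎, and tr α = −2 tr 𝔎. -/

import Mathlib

open Matrix BigOperators

noncomputable section

abbrev V3 := Fin 3 → ℝ
abbrev M3 := Matrix (Fin 3) (Fin 3) ℝ

/-- axial vector of a 3×3 matrix (intended for skew-symmetric matrices) -/
def axl (A : M3) : V3 := ![A 2 1, A 0 2, A 1 0]

/-- the skew-symmetric matrix with given axial vector -/
def antiM (v : V3) : M3 := !![0, -v 2, v 1; v 2, 0, -v 0; -v 1, v 0, 0]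

def symM (X : M3) : M3 := (1/2 : ℝ) • (X + Xᵀ)
def skwM (X : M3) : M3 := (1/2 : ℝ) • (X - Xᵀ)
def devM (X : M3) : M3 := X - ((Matrix.trace X)/3) • (1 : M3)

/-- squared Frobenius norm -/
def frob2 (X : M3) : ℝ := ∑ i, ∑ j, (X i j)^2
/-- Frobenius inner product ⟨X,Y⟩ = tr(XYᵀ) -/
def finner (X Y : M3) : ℝ := ∑ i, ∑ j, X i j * Y i j
/-- squared Euclidean norm of a vector -/
def norm2v (v : V3) : ℝ := ∑ i, (v i)^2

/-- partial derivative ∂ᵢ f -/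
def pd (i : Fin 3) (f : V3 → ℝ) (x : V3) : ℝ := fderiv ℝ f x (Pi.single i 1)

/-- Jacobian matrix (D u)_{ij} = ∂_j u_i -/
def jac (u : V3 → V3) (x : V3) : M3 := Matrix.of fun i j => pd j (fun y => u y i) x

/-- curl of a vector field -/
def curlV (u : V3 → V3) (x : V3) : V3 :=
  ![pd 1 (fun y => u y 2) x - pd 2 (fun y => u y 1) x,
    pd 2 (fun y => u y 0) x - pd 0 (fun y => u y 2) x,
    pd 0 (fun y => u y 1) x - pd 1 (fun y => u y 0) x]

/-- row-wise matrix Curl : (Curl P)_{ij} = ε_{jmn} ∂_m P_{in} -/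
def curlM (P : V3 → M3) (x : V3) : M3 := Matrix.of fun i => curlV (fun y => P y i) x

/-- Levi-Civita symbol on Fin 3 -/
def lc (i j k : Fin 3) : ℝ :=
  ((j.val : ℝ) - (i.val : ℝ)) * ((k.val : ℝ) - (j.val : ℝ)) * ((k.val : ℝ) - (i.val : ℝ)) / 2

set_option maxHeartbeats 2000000 in
theorem nye_converting_identities (A : V3 → M3)
    (hskew : ∀ x, (A x)ᵀ = -(A x))
    (hsmooth : ∀ i j, ContDiff ℝ 1 (fun x => A x i j)) :
    ∀ x : V3,
      devM (symM (-(curlM A x))) = devM (symM (jac (fun y => axl (A y)) x)) ∧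
      skwM (-(curlM A x)) = -(skwM (jac (fun y => axl (A y)) x)) ∧
      Matrix.trace (-(curlM A x)) = -2 * Matrix.trace (jac (fun y => axl (A y)) x) := by
  intro x
  have hentry : ∀ (y : V3) (i j : Fin 3), A y i j = -(A y j i) := by
    intro y i j
    have := congrFun (congrFun (hskew y) j) i
    simpa [Matrix.transpose_apply] using this
  have hdiag : ∀ (k i : Fin 3), pd k (fun y => A y i i) x = 0 := by
    intro k i
    have hz : (fun y : V3 => A y i i) = fun _ => (0:ℝ) := by
      funext y
      have := hentry y i i
      linarith
    rw [pd, hz]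
    simp
  have hanti : ∀ (k i j : Fin 3), pd k (fun y => A y i j) x
      = - pd k (fun y => A y j i) x := by
    intro k i j
    have hz : (fun y : V3 => A y i j) = fun y => -(A y j i) := funext fun y => hentry y i j
    rw [pd, pd, hz, fderiv_fun_neg]
    simp
  have h12 : ∀ k : Fin 3, pd k (fun y => A y 1 2) x = - pd k (fun y => A y 2 1) x :=
    fun k => hanti k 1 2
  have h20 : ∀ k : Fin 3, pd k (fun y => A y 2 0) x = - pd k (fun y => A y 0 2) x :=
    fun k => hanti k 2 0
  have h01 : ∀ k : Fin 3, pd k (fun y => A y 0 1) x = - pd k (fun y => A y 1 0) x :=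
    fun k => hanti k 0 1
  refine ⟨?_, ?_, ?_⟩
  · ext i j
    fin_cases i <;> fin_cases j <;>
      simp [devM, symM, jac, axl, curlM, curlV, Matrix.trace, Fin.sum_univ_three,
        h12, h20, h01, hdiag, Matrix.one_apply] <;> ring
  · ext i j
    fin_cases i <;> fin_cases j <;>
      simp [skwM, jac, axl, curlM, curlV, Fin.sum_univ_three,
        h12, h20, h01, hdiag] <;> ring
  · simp [jac, axl, curlM, curlV, Matrix.trace, Fin.sum_univ_three,
      h12, h20, h01, hdiag]
    ring
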